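/- No species tree estimator ψ simultaneously satisfies: (A1⁻) for any profile of rooted phylogenetic trees, ψ(P) is a rooted phylogenetic tree on some subset of the union of the input leaf sets; (A2) ψ(T,…,T) = T (in particular ψ of a single-tree profile (T) equals T); (A3) removing from a profile a tree whose leaf set has at most two taxa, each occurring in another input tree, does not change the output; (A4) for every nonempty Y ⊆ X, ψ(P|Y) is equal to or refined by ψ(P)|Y. -/

import Mathlib

def IsHierarchyOn {α : Type*} [DecidableEq α] (X : Finset α) (T : Finset (Finset α)) : Prop :=
  (∀ A ∈ T, A ⊆ X ∧ A.Nonempty) ∧ X ∈ T ∧ (∀ x ∈ X, ({x} : Finset α) ∈ T) ∧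
  ∀ A ∈ T, ∀ B ∈ T, A ∩ B = ∅ ∨ A ⊆ B ∨ B ⊆ A

/-- The leaf set of a tree (hierarchy): the union of its clusters. -/
def leaves {α : Type*} [DecidableEq α] (T : Finset (Finset α)) : Finset α := T.sup id

/-- A rooted phylogenetic tree, identified with a hierarchy on its leaf set. -/
def IsTree {α : Type*} [DecidableEq α] (T : Finset (Finset α)) : Prop :=
  IsHierarchyOn (leaves T) T

def restrict {α : Type*} [DecidableEq α] (T : Finset (Finset α)) (W : Finset α) :
    Finset (Finset α) :=
  (T.image (· ∩ W)).filter (·.Nonempty)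

/-- The union of the leaf sets of the trees in a profile. -/
def unionLeaves {α : Type*} [DecidableEq α] (P : List (Finset (Finset α))) : Finset α :=
  (P.map leaves).foldr (· ∪ ·) ∅

/-- `P|Y`: restrict each tree of the profile to `Y` and delete empty restrictions. -/
def restrictProfile {α : Type*} [DecidableEq α] (P : List (Finset (Finset α)))
    (Y : Finset α) : List (Finset (Finset α)) :=
  (P.map (fun T => restrict T Y)).filter (· ≠ ∅)

/-- A profile: a nonempty sequence of rooted phylogenetic trees. -/
def ValidProfile {α : Type*} [DecidableEq α] (P : List (Finset (Finset α))) : Prop :=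
  P ≠ [] ∧ ∀ T ∈ P, IsTree T


namespace Impossible
variable {α : Type*} [DecidableEq α]

lemma mem_leaves {T : Finset (Finset α)} {x : α} : x ∈ leaves T ↔ ∃ A ∈ T, x ∈ A := by
  simp [leaves, Finset.mem_sup]

lemma subset_leaves {T : Finset (Finset α)} {A : Finset α} (h : A ∈ T) : A ⊆ leaves T :=
  fun x hx => mem_leaves.mpr ⟨A, h, hx⟩

lemma tree_nonempty {T : Finset (Finset α)} (hT : IsTree T) {A : Finset α} (hA : A ∈ T) :
    A.Nonempty := (hT.1 A hA).2

lemma tree_root {T : Finset (Finset α)} (hT : IsTree T) : leaves T ∈ T := hT.2.1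

lemma tree_lam {T : Finset (Finset α)} (hT : IsTree T) {A B : Finset α} (hA : A ∈ T)
    (hB : B ∈ T) : A ∩ B = ∅ ∨ A ⊆ B ∨ B ⊆ A := hT.2.2.2 A hA B hB

lemma mem_restrict {T : Finset (Finset α)} {W A' : Finset α} :
    A' ∈ restrict T W ↔ A'.Nonempty ∧ ∃ A ∈ T, A ∩ W = A' := by
  simp only [restrict, Finset.mem_filter, Finset.mem_image]
  tauto

lemma leaves_restrict (T : Finset (Finset α)) (W : Finset α) :
    leaves (restrict T W) = leaves T ∩ W := by
  ext x
  simp only [mem_leaves, Finset.mem_inter]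
  constructor
  · rintro ⟨A', hA', hx⟩
    obtain ⟨-, A, hA, rfl⟩ := mem_restrict.mp hA'
    exact ⟨⟨A, hA, (Finset.mem_inter.mp hx).1⟩, (Finset.mem_inter.mp hx).2⟩
  · rintro ⟨⟨A, hA, hx⟩, hxW⟩
    exact ⟨A ∩ W, mem_restrict.mpr ⟨⟨x, Finset.mem_inter.mpr ⟨hx, hxW⟩⟩, A, hA, rfl⟩,
      Finset.mem_inter.mpr ⟨hx, hxW⟩⟩

lemma restrict_eq_self {T : Finset (Finset α)} (hT : IsTree T) {W : Finset α}
    (h : leaves T ⊆ W) : restrict T W = T := by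
  ext A
  simp only [mem_restrict]
  constructor
  · rintro ⟨-, B, hB, rfl⟩
    rwa [Finset.inter_eq_left.mpr (((subset_leaves hB).trans h))]
  · intro hA
    exact ⟨tree_nonempty hT hA, A, hA, Finset.inter_eq_left.mpr ((subset_leaves hA).trans h)⟩

lemma restrict_isTree {T : Finset (Finset α)} (hT : IsTree T) {W : Finset α}
    (hne : restrict T W ≠ ∅) : IsTree (restrict T W) := by
  have hne' : (restrict T W).Nonempty := Finset.nonempty_iff_ne_empty.mpr hne
  have hlr : leaves (restrict T W) = leaves T ∩ W := leaves_restrict T W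
  refine ⟨?_, ?_, ?_, ?_⟩
  · intro A hA
    exact ⟨subset_leaves hA, (mem_restrict.mp hA).1⟩
  · rw [hlr]
    refine mem_restrict.mpr ⟨?_, leaves T, tree_root hT, rfl⟩
    obtain ⟨A, hA⟩ := hne'
    obtain ⟨hAne, B, hB, rfl⟩ := mem_restrict.mp hA
    obtain ⟨x, hx⟩ := hAne
    exact ⟨x, Finset.mem_inter.mpr ⟨(subset_leaves hB) (Finset.mem_inter.mp hx).1,
      (Finset.mem_inter.mp hx).2⟩⟩
  · intro x hx
    rw [hlr, Finset.mem_inter] at hx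
    refine mem_restrict.mpr ⟨⟨x, Finset.mem_singleton_self x⟩, {x}, hT.2.2.1 x hx.1, ?_⟩
    rw [Finset.singleton_inter_of_mem hx.2]
  · intro A hA B hB
    obtain ⟨-, A', hA', rfl⟩ := mem_restrict.mp hA
    obtain ⟨-, B', hB', rfl⟩ := mem_restrict.mp hB
    rcases tree_lam hT hA' hB' with h | h | h
    · left
      rw [← Finset.subset_empty, ← h]
      intro x hx
      simp only [Finset.mem_inter] at hx ⊢
      exact ⟨hx.1.1, hx.2.1⟩
    · exact Or.inr (Or.inl (Finset.inter_subset_inter_right h))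
    · exact Or.inr (Or.inr (Finset.inter_subset_inter_right h))

lemma restrict_lam {T : Finset (Finset α)} (hT : IsTree T) {W : Finset α} {A B : Finset α}
    (hA : A ∈ restrict T W) (hB : B ∈ restrict T W) : A ∩ B = ∅ ∨ A ⊆ B ∨ B ⊆ A := by
  obtain ⟨-, A', hA', rfl⟩ := mem_restrict.mp hA
  obtain ⟨-, B', hB', rfl⟩ := mem_restrict.mp hB
  rcases tree_lam hT hA' hB' with h | h | h
  · left
    rw [← Finset.subset_empty, ← h]
    intro x hx
    simp only [Finset.mem_inter] at hx ⊢
    exact ⟨hx.1.1, hx.2.1⟩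
  · exact Or.inr (Or.inl (Finset.inter_subset_inter_right h))
  · exact Or.inr (Or.inr (Finset.inter_subset_inter_right h))

lemma leaves_subset_unionLeaves {P : List (Finset (Finset α))} {T : Finset (Finset α)}
    (h : T ∈ P) : leaves T ⊆ unionLeaves P := by
  induction P with
  | nil => cases h
  | cons T' P ih =>
    rcases List.mem_cons.mp h with rfl | h
    · show leaves T ⊆ leaves T ∪ unionLeaves P
      exact Finset.subset_union_left
    · exact (ih h).trans (show unionLeaves P ⊆ leaves T' ∪ unionLeaves P from
        Finset.subset_union_right)

lemma unionLeaves_subset {P : List (Finset (Finset α))} {X : Finset α}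
    (h : ∀ T ∈ P, leaves T ⊆ X) : unionLeaves P ⊆ X := by
  induction P with
  | nil => simp [unionLeaves]
  | cons T' P ih =>
    have : unionLeaves (T' :: P) = leaves T' ∪ unionLeaves P := rfl
    rw [this]
    exact Finset.union_subset (h T' (by simp)) (ih fun T hT => h T (by simp [hT]))

section Triples
variable {a b c : α}

/-- The rooted binary tree `ab|c`. -/
def tree3 (a b c : α) : Finset (Finset α) :=
  {{a}, {b}, {c}, {a, b}, {a, b, c}}

lemma leaves_tree3 : leaves (tree3 a b c) = {a, b, c} := by
  ext x
  simp only [mem_leaves, tree3, Finset.mem_insert, Finset.mem_singleton]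
  constructor
  · rintro ⟨A, hA | hA | hA | hA | hA, hx⟩ <;> subst hA <;> simp_all <;> tauto
  · rintro (rfl | rfl | rfl)
    · exact ⟨({x} : Finset α), Or.inl rfl, Finset.mem_singleton_self x⟩
    · exact ⟨({x} : Finset α), Or.inr (Or.inl rfl), Finset.mem_singleton_self x⟩
    · exact ⟨({x} : Finset α), Or.inr (Or.inr (Or.inl rfl)), Finset.mem_singleton_self x⟩

lemma isTree_tree3 (hab : a ≠ b) (hac : a ≠ c) (hbc : b ≠ c) : IsTree (tree3 a b c) := by
  rw [IsTree, leaves_tree3]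
  refine ⟨?_, ?_, ?_, ?_⟩
  · intro A hA
    simp only [tree3, Finset.mem_insert, Finset.mem_singleton] at hA
    rcases hA with rfl | rfl | rfl | rfl | rfl <;>
      refine ⟨?_, by simp⟩ <;> intro x hx <;> simp_all <;> tauto
  · simp [tree3]
  · intro x hx
    simp only [Finset.mem_insert, Finset.mem_singleton] at hx
    rcases hx with rfl | rfl | rfl <;> simp [tree3]
  · have hba : b ≠ a := hab.symm
    have hca : c ≠ a := hac.symm
    have hcb : c ≠ b := hbc.symm
    intro A hA B hB
    simp only [tree3, Finset.mem_insert, Finset.mem_singleton] at hA hB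
    rcases hA with rfl | rfl | rfl | rfl | rfl <;> rcases hB with rfl | rfl | rfl | rfl | rfl <;>
      first
        | (right; left; intro x hx;
            simp only [Finset.mem_insert, Finset.mem_singleton] at hx ⊢; tauto)
        | (right; right; intro x hx;
            simp only [Finset.mem_insert, Finset.mem_singleton] at hx ⊢; tauto)
        | (left; apply Finset.singleton_inter_of_notMem;
            simp only [Finset.mem_insert, Finset.mem_singleton]; tauto)
        | (left; rw [Finset.inter_comm]; apply Finset.singleton_inter_of_notMem;
            simp only [Finset.mem_insert, Finset.mem_singleton]; tauto)

lemma exists_trip {B : Finset α} (h : B.card = 3) :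
    ∃ p : α × α × α, p.1 ≠ p.2.1 ∧ p.1 ≠ p.2.2 ∧ p.2.1 ≠ p.2.2 ∧ B = {p.1, p.2.1, p.2.2} := by
  obtain ⟨a, b, c, h1, h2, h3, h4⟩ := Finset.card_eq_three.mp h
  exact ⟨(a, b, c), h1, h2, h3, h4⟩

/-- A choice of three distinct elements of a 3-element set. -/
noncomputable def trip (B : Finset α) (h : B.card = 3) : α × α × α := (exists_trip h).choose

lemma trip_spec (B : Finset α) (h : B.card = 3) :
    (trip B h).1 ≠ (trip B h).2.1 ∧ (trip B h).1 ≠ (trip B h).2.2 ∧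
      (trip B h).2.1 ≠ (trip B h).2.2 ∧ B = {(trip B h).1, (trip B h).2.1, (trip B h).2.2} :=
  (exists_trip h).choose_spec

/-- The binary tree on `B` with topology `t`. -/
noncomputable def treeOf (B : Finset α) (h : B.card = 3) (t : Fin 3) : Finset (Finset α) :=
  if t = 0 then tree3 (trip B h).1 (trip B h).2.1 (trip B h).2.2
  else if t = 1 then tree3 (trip B h).1 (trip B h).2.2 (trip B h).2.1
  else tree3 (trip B h).2.1 (trip B h).2.2 (trip B h).1

/-- The distinguished cherry of `treeOf B h t`. -/
noncomputable def pr (B : Finset α) (h : B.card = 3) (t : Fin 3) : Finset α :=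
  if t = 0 then {(trip B h).1, (trip B h).2.1}
  else if t = 1 then {(trip B h).1, (trip B h).2.2}
  else {(trip B h).2.1, (trip B h).2.2}

lemma leaves_treeOf (B : Finset α) (h : B.card = 3) (t : Fin 3) :
    leaves (treeOf B h t) = B := by
  obtain ⟨h1, h2, h3, hB⟩ := trip_spec B h
  unfold treeOf
  split_ifs <;> rw [leaves_tree3] <;> conv_rhs => rw [hB]
  all_goals ext x; simp only [Finset.mem_insert, Finset.mem_singleton]; tauto

lemma isTree_treeOf (B : Finset α) (h : B.card = 3) (t : Fin 3) : IsTree (treeOf B h t) := by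
  obtain ⟨h1, h2, h3, hB⟩ := trip_spec B h
  unfold treeOf
  split_ifs
  · exact isTree_tree3 h1 h2 h3
  · exact isTree_tree3 h2 h1 h3.symm
  · exact isTree_tree3 h3 (Ne.symm h1) (Ne.symm h2)

lemma pr_mem (B : Finset α) (h : B.card = 3) (t : Fin 3) : pr B h t ∈ treeOf B h t := by
  unfold treeOf pr
  split_ifs <;> simp [tree3]

lemma card_leaves_treeOf (B : Finset α) (h : B.card = 3) (t : Fin 3) :
    (leaves (treeOf B h t)).card = 3 := by rw [leaves_treeOf]; exact h

lemma pair_not_lam {a b c : α} (hab : a ≠ b) (hac : a ≠ c) (hbc : b ≠ c) :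
    ¬(({a, b} : Finset α) ∩ {a, c} = ∅ ∨ ({a, b} : Finset α) ⊆ {a, c} ∨
      ({a, c} : Finset α) ⊆ {a, b}) := by
  rintro (h | h | h)
  · have : a ∈ ({a, b} : Finset α) ∩ {a, c} := by simp
    rw [h] at this
    exact absurd this (Finset.notMem_empty a)
  · have := h (by simp : b ∈ ({a, b} : Finset α))
    simp only [Finset.mem_insert, Finset.mem_singleton] at this
    tauto
  · have := h (by simp : c ∈ ({a, c} : Finset α))
    simp only [Finset.mem_insert, Finset.mem_singleton] at this
    tauto

lemma pr_incompat (B : Finset α) (h : B.card = 3) {t t' : Fin 3} (hne : t ≠ t') :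
    ¬(pr B h t ∩ pr B h t' = ∅ ∨ pr B h t ⊆ pr B h t' ∨ pr B h t' ⊆ pr B h t) := by
  obtain ⟨h1, h2, h3, -⟩ := trip_spec B h
  have e0 : pr B h 0 = {(trip B h).1, (trip B h).2.1} := by simp [pr]
  have e1 : pr B h 1 = {(trip B h).1, (trip B h).2.2} := by simp [pr]
  have e2 : pr B h 2 = {(trip B h).2.1, (trip B h).2.2} := by simp [pr]
  have c01 : ¬(pr B h 0 ∩ pr B h 1 = ∅ ∨ pr B h 0 ⊆ pr B h 1 ∨ pr B h 1 ⊆ pr B h 0) := by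
    rw [e0, e1]; exact pair_not_lam h1 h2 h3
  have c10 : ¬(pr B h 1 ∩ pr B h 0 = ∅ ∨ pr B h 1 ⊆ pr B h 0 ∨ pr B h 0 ⊆ pr B h 1) := by
    rw [e0, e1]; exact pair_not_lam h2 h1 h3.symm
  have c02 : ¬(pr B h 0 ∩ pr B h 2 = ∅ ∨ pr B h 0 ⊆ pr B h 2 ∨ pr B h 2 ⊆ pr B h 0) := by
    rw [e0, e2, Finset.pair_comm (trip B h).1 (trip B h).2.1]
    exact pair_not_lam h1.symm h3 h2
  have c20 : ¬(pr B h 2 ∩ pr B h 0 = ∅ ∨ pr B h 2 ⊆ pr B h 0 ∨ pr B h 0 ⊆ pr B h 2) := by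
    rw [e0, e2, Finset.pair_comm (trip B h).1 (trip B h).2.1]
    exact pair_not_lam h3 h1.symm h2.symm
  have c12 : ¬(pr B h 1 ∩ pr B h 2 = ∅ ∨ pr B h 1 ⊆ pr B h 2 ∨ pr B h 2 ⊆ pr B h 1) := by
    rw [e1, e2, Finset.pair_comm (trip B h).1 (trip B h).2.2,
      Finset.pair_comm (trip B h).2.1 (trip B h).2.2]
    exact pair_not_lam h2.symm h3.symm h1
  have c21 : ¬(pr B h 2 ∩ pr B h 1 = ∅ ∨ pr B h 2 ⊆ pr B h 1 ∨ pr B h 1 ⊆ pr B h 2) := by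
    rw [e1, e2, Finset.pair_comm (trip B h).1 (trip B h).2.2,
      Finset.pair_comm (trip B h).2.1 (trip B h).2.2]
    exact pair_not_lam h3.symm h2.symm h1.symm
  fin_cases t <;> fin_cases t' <;>
    first
      | exact absurd rfl hne
      | exact c01 | exact c10 | exact c02 | exact c20 | exact c12 | exact c21

end Triples
lemma mem_eraseIdx_of_ne {β : Type*} :
    ∀ (l : List β) (i j : ℕ), i ≠ j → ∀ (hj : j < l.length), l[j] ∈ l.eraseIdx i := by
  intro l
  induction l with
  | nil => intro i j _ hj; simp at hj
  | cons x xs ih =>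
    intro i j hij hj
    cases i with
    | zero =>
      cases j with
      | zero => exact absurd rfl hij
      | succ j' =>
        rw [List.eraseIdx_cons_zero]
        have he : (x :: xs)[j' + 1] = xs[j']'(by simpa using hj) := by simp
        rw [he]
        exact List.getElem_mem _
    | succ i' =>
      cases j with
      | zero => simp [List.eraseIdx_cons_succ]
      | succ j' =>
        rw [List.eraseIdx_cons_succ]
        have he : (x :: xs)[j' + 1] = xs[j']'(by simpa using hj) := by simp
        rw [he]
        exact List.mem_cons_of_mem _ (ih i' j' (by omega) _)

section Main
variable (ψ : List (Finset (Finset α)) → Finset (Finset α))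

lemma psi_eq
    (h2 : ∀ T : Finset (Finset α), IsTree T → ∀ k, 0 < k → ψ (List.replicate k T) = T)
    (h3 : ∀ P : List (Finset (Finset α)), ValidProfile P → ∀ i : Fin P.length,
        (leaves (P.get i)).card ≤ 2 →
        (∀ x ∈ leaves (P.get i), ∃ j : Fin P.length, j ≠ i ∧ x ∈ leaves (P.get j)) →
        P.eraseIdx i ≠ [] → ψ (P.eraseIdx i) = ψ P)
    (T₀ : Finset (Finset α)) (hT₀ : IsTree T₀) :
    ∀ n (Q : List (Finset (Finset α))), Q.length = n →
      (∀ T' ∈ Q, IsTree T' ∧ leaves T' ⊆ leaves T₀ ∧ (T' = T₀ ∨ (leaves T').card ≤ 2)) →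
      T₀ ∈ Q → ψ Q = T₀ := by
  intro n
  induction n using Nat.strong_induction_on with
  | _ n ih =>
    intro Q hlen hinv hmem
    by_cases hall : ∀ T' ∈ Q, T' = T₀
    · have hQ : Q = List.replicate Q.length T₀ := List.eq_replicate_length.mpr hall
      have hpos : 0 < Q.length := List.length_pos_iff.mpr (List.ne_nil_of_mem hmem)
      have := h2 T₀ hT₀ Q.length hpos
      rw [← hQ] at this
      exact this
    · push_neg at hall
      obtain ⟨T', hT'Q, hT'ne⟩ := hall
      obtain ⟨i, hi⟩ := List.mem_iff_get.mp hT'Q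
      obtain ⟨j₀, hj₀⟩ := List.mem_iff_get.mp hmem
      have hji : j₀ ≠ i := by
        intro hh
        rw [hh, hi] at hj₀
        exact hT'ne hj₀
      have hvalid : ValidProfile Q := ⟨List.ne_nil_of_mem hmem, fun T hT => (hinv T hT).1⟩
      have hcard : (leaves (Q.get i)).card ≤ 2 := by
        rw [hi]
        rcases (hinv T' hT'Q).2.2 with h | h
        · exact absurd h hT'ne
        · exact h
      have htaxa : ∀ x ∈ leaves (Q.get i), ∃ j : Fin Q.length, j ≠ i ∧ x ∈ leaves (Q.get j) := by
        intro x hx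
        refine ⟨j₀, hji, ?_⟩
        rw [hj₀]
        exact (hinv _ (List.get_mem Q i)).2.1 hx
      have herase_len : (Q.eraseIdx (i : ℕ)).length = Q.length - 1 := by
        rw [List.length_eraseIdx]
        simp [i.isLt]
      have hlen2 : 2 ≤ Q.length := by
        by_contra hlt
        push_neg at hlt
        have hv : (j₀ : ℕ) = (i : ℕ) := by
          have := j₀.isLt
          have := i.isLt
          omega
        exact hji (Fin.ext hv)
      have herase_ne : Q.eraseIdx (i : ℕ) ≠ [] := by
        apply List.length_pos_iff.mp
        omega
      have h3app := h3 Q hvalid i hcard htaxa herase_ne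
      have hmem' : T₀ ∈ Q.eraseIdx (i : ℕ) := by
        rw [← hj₀]
        have := mem_eraseIdx_of_ne Q (i : ℕ) (j₀ : ℕ)
          (fun hh => hji (Fin.ext hh.symm)) j₀.isLt
        simpa [List.get_eq_getElem] using this
      have := ih (Q.length - 1) (by omega) (Q.eraseIdx (i : ℕ)) herase_len
        (fun T hT => hinv T (List.eraseIdx_subset hT)) hmem'
      rw [← h3app]
      exact this

/-- The profile consisting of one binary tree on each 3-element subset of `X`,
with topologies chosen by `σ`. -/
noncomputable def profileOf (X : Finset α) (σ : {B // B ∈ X.powersetCard 3} → Fin 3) :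
    List (Finset (Finset α)) :=
  (X.powersetCard 3).attach.toList.map
    (fun B => treeOf B.1 (Finset.mem_powersetCard.mp B.2).2 (σ B))

lemma mem_profileOf {X : Finset α} {σ : {B // B ∈ X.powersetCard 3} → Fin 3}
    {T : Finset (Finset α)} :
    T ∈ profileOf X σ ↔ ∃ B : {B // B ∈ X.powersetCard 3},
      T = treeOf B.1 (Finset.mem_powersetCard.mp B.2).2 (σ B) := by
  unfold profileOf
  simp only [List.mem_map, Finset.mem_toList, Finset.mem_attach, true_and]
  constructor
  · rintro ⟨B, h⟩
    exact ⟨B, h.symm⟩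
  · rintro ⟨B, h⟩
    exact ⟨B, h.symm⟩

lemma key
    (h1 : ∀ P, ValidProfile P → IsTree (ψ P) ∧ leaves (ψ P) ⊆ unionLeaves P)
    (h2 : ∀ T : Finset (Finset α), IsTree T → ∀ k, 0 < k → ψ (List.replicate k T) = T)
    (h3 : ∀ P : List (Finset (Finset α)), ValidProfile P → ∀ i : Fin P.length,
        (leaves (P.get i)).card ≤ 2 →
        (∀ x ∈ leaves (P.get i), ∃ j : Fin P.length, j ≠ i ∧ x ∈ leaves (P.get j)) →
        P.eraseIdx i ≠ [] → ψ (P.eraseIdx i) = ψ P)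
    (h4 : ∀ P, ValidProfile P → ∀ Y : Finset α, Y.Nonempty → Y ⊆ unionLeaves P →
        ψ (restrictProfile P Y) ⊆ restrict (ψ P) Y)
    (X : Finset α) (σ : {B // B ∈ X.powersetCard 3} → Fin 3)
    (B : {B // B ∈ X.powersetCard 3}) :
    treeOf B.1 (Finset.mem_powersetCard.mp B.2).2 (σ B) ⊆ restrict (ψ (profileOf X σ)) B.1 := by
  have hB3 : B.1.card = 3 := (Finset.mem_powersetCard.mp B.2).2
  set T₀ := treeOf B.1 (Finset.mem_powersetCard.mp B.2).2 (σ B) with hT₀def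
  have hT₀tree : IsTree T₀ := isTree_treeOf _ _ _
  have hT₀leaves : leaves T₀ = B.1 := leaves_treeOf _ _ _
  have hT₀mem : T₀ ∈ profileOf X σ := mem_profileOf.mpr ⟨B, rfl⟩
  have hvalidP : ValidProfile (profileOf X σ) := by
    refine ⟨List.ne_nil_of_mem hT₀mem, ?_⟩
    intro T hT
    obtain ⟨B', rfl⟩ := mem_profileOf.mp hT
    exact isTree_treeOf _ _ _
  have hBsub : B.1 ⊆ unionLeaves (profileOf X σ) := by
    rw [← hT₀leaves]
    exact leaves_subset_unionLeaves hT₀mem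
  have hBne : B.1.Nonempty := Finset.card_pos.mp (by rw [hB3]; norm_num)
  have h4app := h4 _ hvalidP B.1 hBne hBsub
  set Q := restrictProfile (profileOf X σ) B.1 with hQdef
  have hQform : ∀ T' ∈ Q, ∃ T ∈ profileOf X σ, T' = restrict T B.1 ∧ T' ≠ ∅ := by
    intro T' hT'
    rw [hQdef] at hT'
    unfold restrictProfile at hT'
    simp only [List.mem_filter, List.mem_map, decide_not, ne_eq, Bool.not_eq_true',
      decide_eq_false_iff_not] at hT'
    obtain ⟨⟨T, hT, rfl⟩, hne⟩ := hT'
    exact ⟨T, hT, rfl, hne⟩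
  have hrT₀ : restrict T₀ B.1 = T₀ := restrict_eq_self hT₀tree (by rw [hT₀leaves])
  have hT₀ne : T₀ ≠ ∅ := by
    intro hcon
    have := tree_root hT₀tree
    rw [hcon] at this
    exact absurd this (Finset.notMem_empty _)
  have hT₀Q : T₀ ∈ Q := by
    rw [hQdef]
    unfold restrictProfile
    simp only [List.mem_filter, List.mem_map, decide_not, ne_eq, Bool.not_eq_true',
      decide_eq_false_iff_not]
    exact ⟨⟨T₀, hT₀mem, hrT₀⟩, hT₀ne⟩
  have hinv : ∀ T' ∈ Q, IsTree T' ∧ leaves T' ⊆ leaves T₀ ∧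
      (T' = T₀ ∨ (leaves T').card ≤ 2) := by
    intro T' hT'
    obtain ⟨T, hTmem, rfl, hne⟩ := hQform T' hT'
    obtain ⟨B', rfl⟩ := mem_profileOf.mp hTmem
    have hB'3 : B'.1.card = 3 := (Finset.mem_powersetCard.mp B'.2).2
    have hB'tree := isTree_treeOf B'.1 (Finset.mem_powersetCard.mp B'.2).2 (σ B')
    have hB'leaves := leaves_treeOf B'.1 (Finset.mem_powersetCard.mp B'.2).2 (σ B')
    refine ⟨restrict_isTree hB'tree hne, ?_, ?_⟩
    · rw [leaves_restrict, hT₀leaves]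
      exact Finset.inter_subset_right
    · by_cases hBB : B' = B
      · subst hBB
        left
        rw [hT₀def, restrict_eq_self hB'tree (by rw [hB'leaves])]
      · right
        have hBBne : B'.1 ≠ B.1 := fun hh => hBB (Subtype.ext hh)
        rw [leaves_restrict, hB'leaves]
        by_contra hcon
        push_neg at hcon
        have hsub : B'.1 ∩ B.1 ⊆ B'.1 := Finset.inter_subset_left
        have hle : (B'.1 ∩ B.1).card ≤ 3 :=
          le_trans (Finset.card_le_card hsub) (le_of_eq hB'3)
        have heq : B'.1 ∩ B.1 = B'.1 :=
          Finset.eq_of_subset_of_card_le hsub (by omega)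
        have hsub2 : B'.1 ⊆ B.1 := by
          rw [← heq]
          exact Finset.inter_subset_right
        exact hBBne (Finset.eq_of_subset_of_card_le hsub2 (by rw [hB3, hB'3]))
  have hpsiQ : ψ Q = T₀ := psi_eq ψ h2 h3 T₀ hT₀tree Q.length Q rfl hinv hT₀Q
  rw [hpsiQ] at h4app
  exact h4app

end Main

section Counting

/-- The number of clusters of `T` containing both `x` and `y`. -/
def dT (T : Finset (Finset α)) (x y : α) : ℕ :=
  (T.filter (fun A => x ∈ A ∧ y ∈ A)).card

/-- The number of clusters of `T` containing `x` and including `A`. -/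
def hgt (T : Finset (Finset α)) (x : α) (A : Finset α) : ℕ :=
  (T.filter (fun C => x ∈ C ∧ A ⊆ C)).card

lemma rec1 {T : Finset (Finset α)} (hT : IsTree T) {A : Finset α} (hA : A ∈ T) {x : α}
    (hx : x ∈ A) {X : Finset α} (hX : leaves T ⊆ X) :
    1 ≤ hgt T x A ∧ A = X.filter (fun y => hgt T x A ≤ dT T x y) := by
  have hAH : A ∈ T.filter (fun C => x ∈ C ∧ A ⊆ C) :=
    Finset.mem_filter.mpr ⟨hA, hx, subset_rfl⟩
  have h1 : 1 ≤ hgt T x A := by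
    show 0 < (T.filter (fun C => x ∈ C ∧ A ⊆ C)).card
    exact Finset.card_pos.mpr ⟨A, hAH⟩
  refine ⟨h1, ?_⟩
  ext y
  simp only [Finset.mem_filter]
  constructor
  · intro hy
    refine ⟨hX ((hT.1 A hA).1 hy), ?_⟩
    show (T.filter (fun C => x ∈ C ∧ A ⊆ C)).card ≤ (T.filter (fun C => x ∈ C ∧ y ∈ C)).card
    apply Finset.card_le_card
    intro C hC
    simp only [Finset.mem_filter] at hC ⊢
    exact ⟨hC.1, hC.2.1, hC.2.2 hy⟩
  · rintro ⟨hyX, hle⟩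
    by_contra hyA
    have hsub : T.filter (fun C => x ∈ C ∧ y ∈ C) ⊆
        (T.filter (fun C => x ∈ C ∧ A ⊆ C)).erase A := by
      intro C hC
      simp only [Finset.mem_filter] at hC
      have hCne : C ≠ A := fun hh => hyA (hh ▸ hC.2.2)
      have hAC : A ⊆ C := by
        rcases tree_lam hT hA hC.1 with hl | hl | hl
        · exfalso
          have hxm : x ∈ A ∩ C := Finset.mem_inter.mpr ⟨hx, hC.2.1⟩
          rw [hl] at hxm
          exact Finset.notMem_empty _ hxm
        · exact hl
        · exact absurd (hl hC.2.2) hyA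
      exact Finset.mem_erase.mpr ⟨hCne, Finset.mem_filter.mpr ⟨hC.1, hC.2.1, hAC⟩⟩
    have hcards := Finset.card_le_card hsub
    rw [Finset.card_erase_of_mem hAH] at hcards
    have e1 : dT T x y = (T.filter (fun C => x ∈ C ∧ y ∈ C)).card := rfl
    have e2 : hgt T x A = (T.filter (fun C => x ∈ C ∧ A ⊆ C)).card := rfl
    omega

lemma exists_exact {T : Finset (Finset α)} (hT : IsTree T) {x : α} {k : ℕ} (hk : 1 ≤ k) :
    ∀ n, ∀ {A : Finset α}, hgt T x A = n → A ∈ T → x ∈ A → k ≤ hgt T x A →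
      ∃ B ∈ T, x ∈ B ∧ hgt T x B = k := by
  intro n
  induction n using Nat.strong_induction_on with
  | _ n ih =>
    intro A hn hA hx hkA
    rcases eq_or_lt_of_le hkA with heq | hlt
    · exact ⟨A, hA, hx, heq.symm⟩
    · have hAH : A ∈ T.filter (fun C => x ∈ C ∧ A ⊆ C) :=
        Finset.mem_filter.mpr ⟨hA, hx, subset_rfl⟩
      set G := (T.filter (fun C => x ∈ C ∧ A ⊆ C)).erase A with hG
      have hGcard : G.card = hgt T x A - 1 := by
        rw [hG, Finset.card_erase_of_mem hAH]
        rfl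
      have hGne : G.Nonempty := by
        rw [← Finset.card_pos, hGcard]
        omega
      obtain ⟨B, hBG, hBmin⟩ := Finset.exists_min_image G Finset.card hGne
      have hBprops := Finset.mem_erase.mp hBG
      have hBfil := Finset.mem_filter.mp hBprops.2
      have hhB : T.filter (fun C => x ∈ C ∧ B ⊆ C) = G := by
        ext C
        simp only [hG, Finset.mem_filter, Finset.mem_erase]
        constructor
        · rintro ⟨hCT, hxC, hBC⟩
          refine ⟨?_, hCT, hxC, hBfil.2.2.trans hBC⟩
          intro hCA
          subst hCA
          exact hBprops.1 (Finset.Subset.antisymm hBC hBfil.2.2)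
        · rintro ⟨hCA, hCT, hxC, hAC⟩
          refine ⟨hCT, hxC, ?_⟩
          rcases tree_lam hT hBfil.1 hCT with hl | hl | hl
          · exfalso
            have hxm : x ∈ B ∩ C := Finset.mem_inter.mpr ⟨hBfil.2.1, hxC⟩
            rw [hl] at hxm
            exact Finset.notMem_empty _ hxm
          · exact hl
          · have hCG : C ∈ G := by
              rw [hG]
              exact Finset.mem_erase.mpr ⟨hCA, Finset.mem_filter.mpr ⟨hCT, hxC, hAC⟩⟩
            have hcc := hBmin C hCG
            have hCB : C = B := Finset.eq_of_subset_of_card_le hl hcc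
            rw [hCB]
      have hBval : hgt T x B = hgt T x A - 1 := by
        show (T.filter (fun C => x ∈ C ∧ B ⊆ C)).card = hgt T x A - 1
        rw [hhB, hGcard]
      have := ih (hgt T x A - 1) (by omega) hBval hBfil.1 hBfil.2.1 (by omega)
      exact this

lemma rec2 {T : Finset (Finset α)} (hT : IsTree T) {X : Finset α} (hX : leaves T ⊆ X)
    {x : α} {k : ℕ} (hk : 1 ≤ k)
    (hne : (X.filter (fun y => k ≤ dT T x y)).Nonempty) :
    X.filter (fun y => k ≤ dT T x y) ∈ T := by
  obtain ⟨y₀, hy₀⟩ := hne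
  have hy := Finset.mem_filter.mp hy₀
  have hdef : dT T x y₀ = (T.filter (fun C => x ∈ C ∧ y₀ ∈ C)).card := rfl
  have hFne : (T.filter (fun C => x ∈ C ∧ y₀ ∈ C)).Nonempty := by
    rw [← Finset.card_pos, ← hdef]
    have := hy.2
    omega
  obtain ⟨A₀, hA₀, hA₀min⟩ := Finset.exists_min_image _ Finset.card hFne
  have hA₀fil := Finset.mem_filter.mp hA₀
  have hsub : T.filter (fun C => x ∈ C ∧ y₀ ∈ C) ⊆ T.filter (fun C => x ∈ C ∧ A₀ ⊆ C) := by
    intro C hC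
    have hCfil := Finset.mem_filter.mp hC
    refine Finset.mem_filter.mpr ⟨hCfil.1, hCfil.2.1, ?_⟩
    rcases tree_lam hT hA₀fil.1 hCfil.1 with hl | hl | hl
    · exfalso
      have hxm : x ∈ A₀ ∩ C := Finset.mem_inter.mpr ⟨hA₀fil.2.1, hCfil.2.1⟩
      rw [hl] at hxm
      exact Finset.notMem_empty _ hxm
    · exact hl
    · have hcc := hA₀min C hC
      rw [Finset.eq_of_subset_of_card_le hl hcc]
  have hkh : k ≤ hgt T x A₀ := le_trans hy.2 (le_trans (le_of_eq hdef) (Finset.card_le_card hsub))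
  obtain ⟨B, hB, hxB, hhB⟩ :=
    exists_exact hT hk (hgt T x A₀) rfl hA₀fil.1 hA₀fil.2.1 hkh
  have hform := (rec1 hT hB hxB hX).2
  rw [hhB] at hform
  rw [← hform]
  exact hB

lemma tree_eq {T T' : Finset (Finset α)} (hT : IsTree T) (hT' : IsTree T') {X : Finset α}
    (hX : leaves T ⊆ X) (hX' : leaves T' ⊆ X)
    (hd : ∀ x ∈ X, ∀ y ∈ X, dT T x y = dT T' x y) : T = T' := by
  have main : ∀ (S S' : Finset (Finset α)), IsTree S → IsTree S' → leaves S ⊆ X →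
      leaves S' ⊆ X → (∀ x ∈ X, ∀ y ∈ X, dT S x y = dT S' x y) → S ⊆ S' := by
    intro S S' hS hS' hXS hXS' hdd A hA
    obtain ⟨x, hx⟩ := tree_nonempty hS hA
    have hxX : x ∈ X := hXS ((hS.1 A hA).1 hx)
    obtain ⟨h1, hform⟩ := rec1 hS hA hx hXS
    have hfeq : X.filter (fun y => hgt S x A ≤ dT S x y)
        = X.filter (fun y => hgt S x A ≤ dT S' x y) := by
      apply Finset.filter_congr
      intro y hy
      rw [hdd x hxX y hy]
    have hne : (X.filter (fun y => hgt S x A ≤ dT S' x y)).Nonempty := by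
      rw [← hfeq, ← hform]
      exact ⟨x, hx⟩
    have hmem := rec2 hS' hXS' h1 hne
    rw [hform, hfeq]
    exact hmem
  exact Finset.Subset.antisymm (main T T' hT hT' hX hX' hd)
    (main T' T hT' hT hX' hX (fun x hx y hy => (hd x hx y hy).symm))

lemma dT_le {T : Finset (Finset α)} (hT : IsTree T) {X : Finset α} (hX : leaves T ⊆ X)
    (x y : α) : dT T x y ≤ X.card := by
  have hdef : dT T x y = (T.filter (fun A => x ∈ A ∧ y ∈ A)).card := rfl
  rw [hdef]
  have hle := Finset.card_le_card_of_injOn (fun A : Finset α => A.card)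
    (s := T.filter (fun A => x ∈ A ∧ y ∈ A)) (t := Finset.Icc 1 X.card) ?_ ?_
  · rw [Nat.card_Icc] at hle
    omega
  · intro A hA
    have hAfil := Finset.mem_filter.mp hA
    have hAne := tree_nonempty hT hAfil.1
    have h1 : 1 ≤ A.card := Finset.card_pos.mpr hAne
    have h2 : A.card ≤ X.card :=
      Finset.card_le_card (((hT.1 A hAfil.1).1).trans hX)
    exact Finset.mem_Icc.mpr ⟨h1, h2⟩
  · intro A hA B hB hfeq
    have hAfil := Finset.mem_filter.mp (Finset.mem_coe.mp hA)
    have hBfil := Finset.mem_filter.mp (Finset.mem_coe.mp hB)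
    rcases tree_lam hT hAfil.1 hBfil.1 with hl | hl | hl
    · exfalso
      have hxm : x ∈ A ∩ B := Finset.mem_inter.mpr ⟨hAfil.2.1, hBfil.2.1⟩
      rw [hl] at hxm
      exact Finset.notMem_empty _ hxm
    · exact Finset.eq_of_subset_of_card_le hl (le_of_eq hfeq.symm)
    · exact (Finset.eq_of_subset_of_card_le hl (le_of_eq hfeq)).symm

end Counting
end Impossible

open Impossible in
/-- No species tree estimator `ψ` simultaneously satisfies (A1⁻), (A2), (A3) and (A4). -/
theorem stmt_14 {α : Type*} [DecidableEq α] [Infinite α] :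
    ¬ ∃ ψ : List (Finset (Finset α)) → Finset (Finset α),
      -- (A1⁻): the output is a rooted tree on some subset of the input taxa
      (∀ P, ValidProfile P → IsTree (ψ P) ∧ leaves (ψ P) ⊆ unionLeaves P) ∧
      -- (A2): unanimity
      (∀ T, IsTree T → ∀ k, 0 < k → ψ (List.replicate k T) = T) ∧
      -- (A3): removing a tree with at most two taxa, each occurring in another
      -- input tree, does not change the output
      (∀ P, ValidProfile P → ∀ i : Fin P.length,
        (leaves (P.get i)).card ≤ 2 →
        (∀ x ∈ leaves (P.get i), ∃ j : Fin P.length, j ≠ i ∧ x ∈ leaves (P.get j)) →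
        P.eraseIdx i ≠ [] →
        ψ (P.eraseIdx i) = ψ P) ∧
      -- (A4): ψ(P|Y) is equal to or refined by ψ(P)|Y
      (∀ P, ValidProfile P → ∀ Y : Finset α, Y.Nonempty → Y ⊆ unionLeaves P →
        ψ (restrictProfile P Y) ⊆ restrict (ψ P) Y) := by
  rintro ⟨ψ, h1, h2, h3, h4⟩
  classical
  set X : Finset α := (Finset.range 30).map ⟨_, (Infinite.natEmbedding α).injective⟩ with hXdef
  have hXcard : X.card = 30 := by
    rw [hXdef, Finset.card_map, Finset.card_range]
  obtain ⟨B₀, hB₀⟩ : (X.powersetCard 3).Nonempty := by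
    rw [← Finset.card_pos, Finset.card_powersetCard, hXcard]
    exact Nat.choose_pos (by norm_num)
  have hvalid : ∀ σ : {B // B ∈ X.powersetCard 3} → Fin 3, ValidProfile (profileOf X σ) := by
    intro σ
    constructor
    · apply List.ne_nil_of_mem (a := treeOf B₀ (Finset.mem_powersetCard.mp hB₀).2 (σ ⟨B₀, hB₀⟩))
      exact mem_profileOf.mpr ⟨⟨B₀, hB₀⟩, rfl⟩
    · intro T hT
      obtain ⟨B', rfl⟩ := mem_profileOf.mp hT
      exact isTree_treeOf _ _ _
  have hleaves : ∀ σ : {B // B ∈ X.powersetCard 3} → Fin 3,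
      leaves (ψ (profileOf X σ)) ⊆ X := by
    intro σ
    refine (h1 _ (hvalid σ)).2.trans (unionLeaves_subset ?_)
    intro T hT
    obtain ⟨B', rfl⟩ := mem_profileOf.mp hT
    rw [leaves_treeOf]
    exact (Finset.mem_powersetCard.mp B'.2).1
  set F : ({B // B ∈ X.powersetCard 3} → Fin 3) → (↥X → ↥X → Fin 31) :=
    fun σ x y => ⟨min (dT (ψ (profileOf X σ)) x.1 y.1) 30,
      lt_of_le_of_lt (min_le_right _ _) (by norm_num)⟩ with hFdef
  have hinj : Function.Injective F := by
    intro σ σ' hF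
    have hSeq : ψ (profileOf X σ) = ψ (profileOf X σ') := by
      apply tree_eq (h1 _ (hvalid σ)).1 (h1 _ (hvalid σ')).1 (hleaves σ) (hleaves σ')
      intro x hx y hy
      have hxy : F σ ⟨x, hx⟩ ⟨y, hy⟩ = F σ' ⟨x, hx⟩ ⟨y, hy⟩ := by rw [hF]
      have hval := congrArg Fin.val hxy
      simp only [hFdef] at hval
      have d1 := dT_le (h1 _ (hvalid σ)).1 (hleaves σ) x y
      have d2 := dT_le (h1 _ (hvalid σ')).1 (hleaves σ') x y
      rw [hXcard] at d1 d2
      rw [min_eq_left d1, min_eq_left d2] at hval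
      exact hval
    funext B
    by_contra hne
    have k1 := key ψ h1 h2 h3 h4 X σ B
    have k2 := key ψ h1 h2 h3 h4 X σ' B
    rw [hSeq] at k1
    have hB3 : B.1.card = 3 := (Finset.mem_powersetCard.mp B.2).2
    have hStree := (h1 _ (hvalid σ')).1
    have hp1 : pr B.1 (Finset.mem_powersetCard.mp B.2).2 (σ B)
        ∈ restrict (ψ (profileOf X σ')) B.1 := k1 (pr_mem _ _ _)
    have hp2 : pr B.1 (Finset.mem_powersetCard.mp B.2).2 (σ' B)
        ∈ restrict (ψ (profileOf X σ')) B.1 := k2 (pr_mem _ _ _)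
    exact pr_incompat B.1 (Finset.mem_powersetCard.mp B.2).2 hne
      (restrict_lam hStree hp1 hp2)
  have hcard := Fintype.card_le_of_injective F hinj
  have hcK : Fintype.card {B // B ∈ X.powersetCard 3} = 4060 := by
    rw [Fintype.card_coe, Finset.card_powersetCard, hXcard]
    decide
  have hdom : Fintype.card ({B // B ∈ X.powersetCard 3} → Fin 3) = 3 ^ 4060 := by
    rw [Fintype.card_fun, hcK, Fintype.card_fin]
  have hcX : Fintype.card ↥X = 30 := by rw [Fintype.card_coe, hXcard]
  have hcod : Fintype.card (↥X → ↥X → Fin 31) = (31 ^ 30) ^ 30 := by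
    rw [Fintype.card_fun, Fintype.card_fun, hcX, Fintype.card_fin]
  rw [hdom, hcod] at hcard
  have hlt : ((31 : ℕ) ^ 30) ^ 30 < 3 ^ 4060 := by
    have e1 : ((31 : ℕ) ^ 30) ^ 30 = 31 ^ 900 := by rw [← pow_mul]
    have e2 : (31 : ℕ) ^ 900 ≤ ((3 : ℕ) ^ 4) ^ 900 :=
      Nat.pow_le_pow_left (by norm_num) 900
    have e3 : (((3 : ℕ) ^ 4) ^ 900 : ℕ) = 3 ^ 3600 := by rw [← pow_mul]
    have e4 : (3 : ℕ) ^ 3600 < 3 ^ 4060 := Nat.pow_lt_pow_right (by norm_num) (by norm_num)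
    omega
  exact absurd hcard (not_le.mpr hlt)
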